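/- Let q ∈ ℝ^M have positive entries, let n ≥ 1, and for each k = 1,…,n let A^k ∈ ℝ^{m_k×M} and b^k ∈ ℝ^{m_k} satisfy the GIS conditions, and set C^k := {x ∈ Δ_M : A^k x = b^k}. Assume C := C^1 ∩ … ∩ C^n is nonempty. Fix a subset I ⊆ {1,…,n} and define a sequence (p^{(k)})_{k≥0} by p^{(0)} = q and, for k ≥ 1 with r := ((k−1) mod n) + 1: if r ∈ I then p^{(k)}_j = p^{(k−1)}_j · exp(Σ_i (A^r)_{ij} · log(b^r_i/(A^r p^{(k−1)})_i)) (the GIS update applied with A^r, b^r), and if r ∉ I then p^{(k)} is the unique minimizer of p ↦ KL(p, p^{(k−1)}) over C^r. Assume moreover that every iterate p^{(k)} has strictly positive entries (so that all steps are well defined). Then p^{(k)} converges, as k → ∞, to the unique minimizer of p ↦ KL(p, q) over p ∈ C. -/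

import Mathlib

open Filter Topology

/-- Kullback--Leibler divergence of two nonnegative vectors,
`KL(p, q) = ∑ⱼ (pⱼ log(pⱼ/qⱼ) − pⱼ + qⱼ)`. -/
noncomputable def KL {ι : Type*} [Fintype ι] (p q : ι → ℝ) : ℝ :=
  ∑ j, (p j * Real.log (p j / q j) - p j + q j)

lemma myLog_ge (x : ℝ) (hx : 0 < x) : 1 - x⁻¹ ≤ Real.log x := by
  have h := Real.log_le_sub_one_of_pos (x := x⁻¹) (by positivity)
  rw [Real.log_inv] at h
  linarith

lemma myLog_le_half (x : ℝ) (hx : 0 < x) : Real.log x ≤ x / 2 := by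
  have h1 : Real.log x = 2 * Real.log (Real.sqrt x) := by
    rw [Real.log_sqrt hx.le]; ring
  have h2 := Real.log_le_sub_one_of_pos (Real.sqrt_pos.2 hx)
  have h3 : (Real.sqrt x - 2)^2 ≥ 0 := sq_nonneg _
  have h4 : Real.sqrt x ^ 2 = x := Real.sq_sqrt hx.le
  nlinarith

lemma klterm_nonneg {x y : ℝ} (hx : 0 ≤ x) (hy : 0 < y) :
    0 ≤ x * Real.log (x / y) - x + y := by
  rcases eq_or_lt_of_le hx with h | h
  · simp [← h]; linarith
  · have h1 := Real.log_le_sub_one_of_pos (x := y / x) (by positivity)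
    have h2 : Real.log (x / y) = - Real.log (y / x) := by
      rw [← Real.log_inv]; congr 1; field_simp
    have h1' : x * Real.log (y / x) ≤ y - x := by
      have := mul_le_mul_of_nonneg_left h1 h.le
      have hxx : x * (y / x) = y := by field_simp
      nlinarith
    rw [h2]; nlinarith

lemma klterm_pos {x y : ℝ} (hx : 0 < x) (hy : 0 < y) (hne : x ≠ y) :
    0 < x * Real.log (x / y) - x + y := by
  have h1 := Real.log_lt_sub_one_of_pos (x := y / x) (by positivity)
    (by intro h; apply hne; field_simp at h; linarith)
  have h2 : Real.log (x / y) = - Real.log (y / x) := by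
    rw [← Real.log_inv]; congr 1; field_simp
  have h1' : x * Real.log (y / x) < y - x := by
    have := mul_lt_mul_of_pos_left h1 hx
    have hxx : x * (y / x) = y := by field_simp
    nlinarith
  rw [h2]; nlinarith

lemma klterm_sqrt {x y : ℝ} (hx : 0 ≤ x) (hy : 0 < y) :
    (Real.sqrt x - Real.sqrt y)^2 ≤ x * Real.log (x / y) - x + y := by
  rcases eq_or_lt_of_le hx with h | h
  · rw [← h]; simp; rw [Real.sq_sqrt hy.le]
  · set a := Real.sqrt x with ha
    set b := Real.sqrt y with hb
    have hax : a^2 = x := Real.sq_sqrt h.le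
    have hby : b^2 = y := Real.sq_sqrt hy.le
    have hap : 0 < a := Real.sqrt_pos.2 h
    have hbp : 0 < b := Real.sqrt_pos.2 hy
    have hlog : Real.log (x / y) = 2 * Real.log (a / b) := by
      rw [Real.log_div (ne_of_gt h) (ne_of_gt hy), Real.log_div (ne_of_gt hap) (ne_of_gt hbp),
        ha, hb, Real.log_sqrt h.le, Real.log_sqrt hy.le]; ring
    have h2 := myLog_ge (a / b) (by positivity)
    have h3 : (a / b)⁻¹ = b / a := by field_simp
    rw [h3] at h2
    have h4 : b / a * a = b := by field_simp
    have h5 : x * Real.log (x / y) ≥ 2 * a^2 - 2 * a * b := by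
      rw [hlog, ← hax]; nlinarith
    nlinarith

lemma klterm_pinsker {x y B : ℝ} (hx : 0 ≤ x) (hy : 0 < y) (hxB : x ≤ B) (hyB : y ≤ B) :
    (x - y)^2 ≤ 4 * B * (x * Real.log (x / y) - x + y) := by
  have h1 := klterm_sqrt hx hy
  have hax : Real.sqrt x ^ 2 = x := Real.sq_sqrt hx
  have hby : Real.sqrt y ^ 2 = y := Real.sq_sqrt hy.le
  have hB : 0 < B := lt_of_lt_of_le hy hyB
  have hsx : 0 ≤ Real.sqrt x := Real.sqrt_nonneg x
  have hsy : 0 ≤ Real.sqrt y := Real.sqrt_nonneg y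
  have hsxB : Real.sqrt x ≤ Real.sqrt B := Real.sqrt_le_sqrt hxB
  have hsyB : Real.sqrt y ≤ Real.sqrt B := Real.sqrt_le_sqrt hyB
  have hBB : Real.sqrt B ^ 2 = B := Real.sq_sqrt hB.le
  have key : (x - y)^2 = (Real.sqrt x - Real.sqrt y)^2 * (Real.sqrt x + Real.sqrt y)^2 := by
    rw [← mul_pow]; congr 1; nlinarith
  rw [key]
  have h6 : (Real.sqrt x + Real.sqrt y)^2 ≤ 4 * B := by nlinarith
  nlinarith [sq_nonneg (Real.sqrt x - Real.sqrt y)]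


lemma KL_nonneg {ι : Type*} [Fintype ι] {p q : ι → ℝ}
    (hp : ∀ j, 0 ≤ p j) (hq : ∀ j, 0 < q j) : 0 ≤ KL p q :=
  Finset.sum_nonneg fun j _ => klterm_nonneg (hp j) (hq j)

lemma KL_term_le {ι : Type*} [Fintype ι] {p q : ι → ℝ}
    (hp : ∀ j, 0 ≤ p j) (hq : ∀ j, 0 < q j) (j : ι) :
    p j * Real.log (p j / q j) - p j + q j ≤ KL p q :=
  Finset.single_le_sum (fun i _ => klterm_nonneg (hp i) (hq i)) (Finset.mem_univ j)

lemma exp_sum_le {m : ℕ} (w t : Fin m → ℝ) (hw : ∀ i, 0 ≤ w i) (hw1 : ∑ i, w i = 1) :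
    Real.exp (∑ i, w i * t i) ≤ ∑ i, w i * Real.exp (t i) := by
  have h := (convexOn_exp).map_sum_le (t := Finset.univ) (fun i _ => hw i) hw1
    (fun i _ => Set.mem_univ (t i))
  simpa [smul_eq_mul] using h


lemma Ezero {M mm : ℕ} (A : Fin mm → Fin M → ℝ) (b : Fin mm → ℝ)
    (p p' z : Fin M → ℝ) (hp : ∀ j, 0 < p j) (hp' : ∀ j, 0 < p' j)
    (S : Set (Fin M → ℝ))
    (hS : S = {x : Fin M → ℝ |
      (∀ j, 0 ≤ x j) ∧ (∑ j, x j = 1) ∧ ∀ i, ∑ j, A i j * x j = b i})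
    (hp'S : p' ∈ S) (hmin : ∀ w ∈ S, KL p' p ≤ KL w p) (hz : z ∈ S) :
    ∑ j, (z j - p' j) * Real.log (p' j / p j) = 0 := by
  rcases Nat.eq_zero_or_pos M with hM | hM
  · have : (Finset.univ : Finset (Fin M)) = ∅ := by
      rw [Finset.univ_eq_empty_iff]; rw [hM]; exact Fin.isEmpty'
    rw [this, Finset.sum_empty]
  set v : Fin M → ℝ := fun j => z j - p' j with hv
  -- φ : parametrized KL along the segment
  set φ : ℝ → ℝ := fun t => KL (fun j => p' j + t * v j) p with hφ
  -- φ has a local min at 0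
  have hne : (Finset.univ : Finset (Fin M)).Nonempty := by
    rw [Finset.univ_nonempty_iff]; exact Fin.pos_iff_nonempty.1 hM
  set δ : ℝ := Finset.univ.inf' hne p' with hδ
  have hδ0 : 0 < δ := by
    rw [hδ, Finset.lt_inf'_iff]; exact fun j _ => hp' j
  set V : ℝ := Finset.univ.sup' hne (fun j => |v j|) with hV
  have hV0 : 0 ≤ V :=
    le_trans (abs_nonneg (v ⟨0, hM⟩)) (Finset.le_sup' (fun j => |v j|) (Finset.mem_univ (⟨0, hM⟩ : Fin M)))
  set ε : ℝ := δ / (V + 1) with hε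
  have hε0 : 0 < ε := by positivity
  have hmem : ∀ t : ℝ, |t| < ε → (fun j => p' j + t * v j) ∈ S := by
    intro t ht
    rw [hS]
    rw [hS] at hp'S hz
    obtain ⟨hz0, hz1, hz2⟩ := hz
    obtain ⟨hq0, hq1, hq2⟩ := hp'S
    refine ⟨fun j => ?_, ?_, fun i => ?_⟩
    · have h1 : |t * v j| ≤ ε * V := by
        rw [abs_mul]
        apply mul_le_mul ht.le (Finset.le_sup' _ (Finset.mem_univ j)) (abs_nonneg _) hε0.le
      have h2 : ε * V < δ := by
        rw [hε]; rw [div_mul_eq_mul_div, div_lt_iff₀ (by positivity)]; nlinarith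
      have h3 : δ ≤ p' j := Finset.inf'_le _ (Finset.mem_univ j)
      have := neg_abs_le (t * v j)
      show 0 ≤ p' j + t * v j
      linarith
    · have : ∑ j, (p' j + t * v j) = (∑ j, p' j) + t * ∑ j, v j := by
        rw [Finset.mul_sum, ← Finset.sum_add_distrib]
      rw [this, hq1]
      have : ∑ j, v j = 0 := by
        simp only [hv, Finset.sum_sub_distrib, hz1, hq1, sub_self]
      rw [this, mul_zero, add_zero]
    · have : ∑ j, A i j * (p' j + t * v j)
          = (∑ j, A i j * p' j) + t * ∑ j, A i j * v j := by
        rw [Finset.mul_sum, ← Finset.sum_add_distrib]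
        congr 1; ext j; ring
      rw [this, hq2]
      have : ∑ j, A i j * v j = 0 := by
        have : ∑ j, A i j * v j = (∑ j, A i j * z j) - ∑ j, A i j * p' j := by
          rw [← Finset.sum_sub_distrib]; congr 1; ext j; simp [hv]; ring
        rw [this, hz2, hq2, sub_self]
      rw [this, mul_zero, add_zero]
  have hlocmin : IsLocalMin φ 0 := by
    have hball : Metric.ball (0:ℝ) ε ∈ 𝓝 (0:ℝ) := Metric.ball_mem_nhds _ hε0
    refine Filter.eventually_of_mem hball (fun t ht => ?_)
    have ht' : |t| < ε := by simpa [Real.dist_eq] using ht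
    have h1 := hmin _ (hmem t ht')
    have h0 : KL (fun j => p' j + 0 * v j) p = KL p' p := by
      congr 1; funext j; ring
    show KL (fun j => p' j + 0 * v j) p ≤ KL (fun j => p' j + t * v j) p
    rw [h0]; exact h1
  -- φ has derivative ∑ v_j log(p'_j/p_j) at 0
  have hderiv : HasDerivAt φ (∑ j, v j * Real.log (p' j / p j)) 0 := by
    have : HasDerivAt (fun t => ∑ j, ((p' j + t * v j) * Real.log ((p' j + t * v j) / p j)
        - (p' j + t * v j) + p j)) (∑ j, v j * Real.log (p' j / p j)) 0 := by
      apply HasDerivAt.fun_sum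
      intro j _
      have hg : HasDerivAt (fun t : ℝ => p' j + t * v j) (v j) 0 := by
        simpa using ((hasDerivAt_id (0:ℝ)).mul_const (v j)).const_add (p' j)
      have hgpos : (0:ℝ) < p' j + 0 * v j := by simpa using hp' j
      have hlog : HasDerivAt (fun t : ℝ => Real.log ((p' j + t * v j) / p j))
          (v j / p' j) 0 := by
        have hdiv : HasDerivAt (fun t : ℝ => (p' j + t * v j) / p j) (v j / p j) 0 :=
          hg.div_const (p j)
        have hne0 : (p' j + 0 * v j) / p j ≠ 0 := by
          have h1 := hp j
          have h2 := hp' j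
          simp only [zero_mul, add_zero]
          positivity
        have := (Real.hasDerivAt_log hne0).comp 0 hdiv
        refine this.congr_deriv ?_
        have h1 := (hp j).ne'
        have h2 := (hp' j).ne'
        simp only [zero_mul, add_zero]
        field_simp
      have hmul : HasDerivAt (fun t : ℝ => (p' j + t * v j) * Real.log ((p' j + t * v j) / p j))
          (v j * Real.log ((p' j + 0 * v j) / p j) + (p' j + 0 * v j) * (v j / p' j)) 0 :=
        hg.mul hlog
      have heq : v j * Real.log ((p' j + 0 * v j) / p j) + (p' j + 0 * v j) * (v j / p' j)
          = v j * Real.log (p' j / p j) + v j := by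
        have h2 := (hp' j).ne'
        simp only [zero_mul, add_zero]
        field_simp
      rw [heq] at hmul
      have := (hmul.sub hg).add_const (p j)
      convert this using 1
      · funext t; rfl
      ring
    exact this
  have := hlocmin.hasDerivAt_eq_zero hderiv
  rw [← this]


lemma KL_diff {M : ℕ} (p p' z : Fin M → ℝ) (hp : ∀ j, 0 < p j) (hp' : ∀ j, 0 < p' j)
    (hz0 : ∀ j, 0 ≤ z j) :
    KL z p' - KL z p = ∑ j, (- (z j * Real.log (p' j / p j)) + (p' j - p j)) := by
  rw [KL, KL, ← Finset.sum_sub_distrib]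
  apply Finset.sum_congr rfl
  intro j _
  rcases eq_or_lt_of_le (hz0 j) with h | h
  · simp [← h]
  · have e1 : Real.log (z j / p' j) = Real.log (z j) - Real.log (p' j) :=
      Real.log_div (ne_of_gt h) (ne_of_gt (hp' j))
    have e2 : Real.log (z j / p j) = Real.log (z j) - Real.log (p j) :=
      Real.log_div (ne_of_gt h) (ne_of_gt (hp j))
    have e3 : Real.log (p' j / p j) = Real.log (p' j) - Real.log (p j) :=
      Real.log_div (ne_of_gt (hp' j)) (ne_of_gt (hp j))
    rw [e1, e2, e3]; ring

lemma sum_split {M : ℕ} (u w : Fin M → ℝ) :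
    ∑ j, (- (u j) + w j) = - (∑ j, u j) + ∑ j, w j := by
  rw [Finset.sum_add_distrib, Finset.sum_neg_distrib]

lemma proj_identity {M : ℕ} (p p' z : Fin M → ℝ) (hp : ∀ j, 0 < p j) (hp' : ∀ j, 0 < p' j)
    (hz0 : ∀ j, 0 ≤ z j)
    (hE : ∑ j, (z j - p' j) * Real.log (p' j / p j) = 0) :
    KL z p' = KL z p - KL p' p := by
  have h1 := KL_diff p p' z hp hp' hz0
  have h2 : ∑ j, z j * Real.log (p' j / p j) = ∑ j, p' j * Real.log (p' j / p j) := by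
    have e : ∑ j, (z j - p' j) * Real.log (p' j / p j)
        = ∑ j, z j * Real.log (p' j / p j) - ∑ j, p' j * Real.log (p' j / p j) := by
      rw [← Finset.sum_sub_distrib]; apply Finset.sum_congr rfl; intros; ring
    rw [e] at hE; linarith
  have h3 : KL p' p = (∑ j, p' j * Real.log (p' j / p j)) - ((∑ j, p' j) - ∑ j, p j) := by
    rw [KL]
    have e : ∀ j : Fin M, p' j * Real.log (p' j / p j) - p' j + p j
        = p' j * Real.log (p' j / p j) - (p' j - p j) := fun j => by ring
    rw [Finset.sum_congr rfl (fun j _ => e j), Finset.sum_sub_distrib, Finset.sum_sub_distrib]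
  have h4 : ∑ j, (- (z j * Real.log (p' j / p j)) + (p' j - p j))
      = - (∑ j, z j * Real.log (p' j / p j)) + ((∑ j, p' j) - ∑ j, p j) := by
    rw [sum_split, Finset.sum_sub_distrib]
  rw [h4, h2] at h1
  linarith

lemma gis_identity {M mm : ℕ} (A : Fin mm → Fin M → ℝ) (b : Fin mm → ℝ)
    (p p' z : Fin M → ℝ) (hp : ∀ j, 0 < p j)
    (hup : p' = fun j => p j *
      Real.exp (∑ i, A i j * Real.log (b i / ∑ j', A i j' * p j')))
    (hz : ∀ i, ∑ j, A i j * z j = b i) (hz0 : ∀ j, 0 ≤ z j) :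
    KL z p' = KL z p - ((∑ i, b i * Real.log (b i / ∑ j', A i j' * p j'))
      - ((∑ j, p' j) - ∑ j, p j)) := by
  have hp' : ∀ j, 0 < p' j := by
    intro j; rw [hup]; exact mul_pos (hp j) (Real.exp_pos _)
  have hlog : ∀ j, Real.log (p' j / p j)
      = ∑ i, A i j * Real.log (b i / ∑ j', A i j' * p j') := by
    intro j
    simp only [hup]
    rw [show p j * Real.exp (∑ i, A i j * Real.log (b i / ∑ j', A i j' * p j')) / p j
      = Real.exp (∑ i, A i j * Real.log (b i / ∑ j', A i j' * p j')) from by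
        rw [mul_comm, mul_div_assoc, div_self (ne_of_gt (hp j)), mul_one], Real.log_exp]
  have h1 := KL_diff p p' z hp hp' hz0
  have h2 : ∑ j, z j * Real.log (p' j / p j)
      = ∑ i, b i * Real.log (b i / ∑ j', A i j' * p j') := by
    calc ∑ j, z j * Real.log (p' j / p j)
        = ∑ j, ∑ i, z j * (A i j * Real.log (b i / ∑ j', A i j' * p j')) := by
          apply Finset.sum_congr rfl; intro j _; rw [hlog j, Finset.mul_sum]
      _ = ∑ i, ∑ j, z j * (A i j * Real.log (b i / ∑ j', A i j' * p j')) :=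
          Finset.sum_comm
      _ = ∑ i, (∑ j, A i j * z j) * Real.log (b i / ∑ j', A i j' * p j') := by
          apply Finset.sum_congr rfl; intro i _
          rw [Finset.sum_mul]; apply Finset.sum_congr rfl; intros; ring
      _ = ∑ i, b i * Real.log (b i / ∑ j', A i j' * p j') := by
          apply Finset.sum_congr rfl; intro i _; rw [hz i]
  have h3 : ∑ j, (- (z j * Real.log (p' j / p j)) + (p' j - p j))
      = - ∑ j, z j * Real.log (p' j / p j) + ((∑ j, p' j) - ∑ j, p j) := by
    rw [sum_split, Finset.sum_sub_distrib]
  rw [h3, h2] at h1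
  linarith


lemma gis_decr {M mm : ℕ} (A : Fin mm → Fin M → ℝ) (b : Fin mm → ℝ) (p p' : Fin M → ℝ)
    (hp : ∀ j, 0 < p j) (hA0 : ∀ i j, 0 ≤ A i j) (hArow : ∀ i, ∃ j, A i j ≠ 0)
    (hAcol : ∀ j, ∑ i, A i j = 1) (hb0 : ∀ i, 0 < b i) (hbsum : ∑ i, b i = 1)
    (hup : p' = fun j => p j *
      Real.exp (∑ i, A i j * Real.log (b i / ∑ j', A i j' * p j'))) :
    0 ≤ (∑ i, b i * Real.log (b i / ∑ j', A i j' * p j')) - ((∑ j, p' j) - ∑ j, p j)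
    ∧ ∀ i₀, b i₀ * Real.log (b i₀ / ∑ j', A i₀ j' * p j') - b i₀ + (∑ j', A i₀ j' * p j')
        ≤ (∑ i, b i * Real.log (b i / ∑ j', A i j' * p j')) - ((∑ j, p' j) - ∑ j, p j) := by
  set c : Fin mm → ℝ := fun i => ∑ j', A i j' * p j' with hc
  have hcpos : ∀ i, 0 < c i := by
    intro i
    obtain ⟨j₀, hj₀⟩ := hArow i
    have hj₀' : 0 < A i j₀ := lt_of_le_of_ne (hA0 i j₀) (Ne.symm hj₀)
    exact Finset.sum_pos' (fun j _ => mul_nonneg (hA0 i j) (hp j).le)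
      ⟨j₀, Finset.mem_univ j₀, mul_pos hj₀' (hp j₀)⟩
  have hsumc : ∑ i, c i = ∑ j, p j := by
    rw [hc]
    simp only
    rw [Finset.sum_comm]
    apply Finset.sum_congr rfl
    intro j _
    rw [← Finset.sum_mul, hAcol j, one_mul]
  have hsump' : ∑ j, p' j ≤ 1 := by
    have key : ∀ j, p' j ≤ ∑ i, A i j * (b i / c i) * p j := by
      intro j
      have hj := exp_sum_le (fun i => A i j) (fun i => Real.log (b i / c i))
        (fun i => hA0 i j) (hAcol j)
      have hj' : Real.exp (∑ i, A i j * Real.log (b i / c i)) ≤ ∑ i, A i j * (b i / c i) := by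
        refine le_trans hj (le_of_eq ?_)
        apply Finset.sum_congr rfl
        intro i _
        rw [Real.exp_log (div_pos (hb0 i) (hcpos i))]
      have := mul_le_mul_of_nonneg_left hj' (hp j).le
      rw [hup]
      refine le_trans this (le_of_eq ?_)
      rw [Finset.mul_sum]
      apply Finset.sum_congr rfl
      intros; ring
    calc ∑ j, p' j ≤ ∑ j, ∑ i, A i j * (b i / c i) * p j :=
          Finset.sum_le_sum (fun j _ => key j)
      _ = ∑ i, (b i / c i) * ∑ j, A i j * p j := by
          rw [Finset.sum_comm]
          apply Finset.sum_congr rfl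
          intro i _
          rw [Finset.mul_sum]
          apply Finset.sum_congr rfl
          intros; ring
      _ = ∑ i, b i := by
          apply Finset.sum_congr rfl
          intro i _
          rw [show ∑ j, A i j * p j = c i from rfl, div_mul_cancel₀ _ (ne_of_gt (hcpos i))]
      _ = 1 := hbsum
  have hKL : ∑ i, b i * Real.log (b i / c i)
      = (∑ i, (b i * Real.log (b i / c i) - b i + c i)) + 1 - ∑ j, p j := by
    have e : ∑ i, (b i * Real.log (b i / c i) - b i + c i)
        = (∑ i, b i * Real.log (b i / c i)) - (∑ i, b i) + ∑ i, c i := by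
      rw [Finset.sum_add_distrib, Finset.sum_sub_distrib]
    rw [e, hbsum, hsumc]; ring
  have hterm : ∀ i₀, b i₀ * Real.log (b i₀ / c i₀) - b i₀ + c i₀
      ≤ ∑ i, (b i * Real.log (b i / c i) - b i + c i) :=
    fun i₀ => Finset.single_le_sum
      (fun i _ => klterm_nonneg (hb0 i).le (hcpos i)) (Finset.mem_univ i₀)
  have h0 : 0 ≤ ∑ i, (b i * Real.log (b i / c i) - b i + c i) :=
    Finset.sum_nonneg (fun i _ => klterm_nonneg (hb0 i).le (hcpos i))
  constructor
  · rw [show (∑ i, b i * Real.log (b i / ∑ j', A i j' * p j'))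
      = ∑ i, b i * Real.log (b i / c i) from rfl, hKL]
    linarith
  · intro i₀
    rw [show (∑ i, b i * Real.log (b i / ∑ j', A i j' * p j'))
      = ∑ i, b i * Real.log (b i / c i) from rfl, hKL]
    have := hterm i₀
    rw [show (∑ j', A i₀ j' * p j') = c i₀ from rfl]
    linarith


lemma pj_bound {z pj Kq : ℝ} (hz0 : 0 ≤ z) (hz1 : z ≤ 1) (hpj : 0 < pj)
    (h : z * Real.log (z / pj) - z + pj ≤ Kq) : pj ≤ 2 * Kq + 4 := by
  have hKq : 0 ≤ Kq := le_trans (klterm_nonneg hz0 hpj) h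
  rcases le_or_gt pj 1 with h1 | h1
  · linarith
  · rcases eq_or_lt_of_le hz0 with h2 | h2
    · rw [← h2] at h; simp at h; linarith
    · have e1 : Real.log (z / pj) = Real.log z - Real.log pj :=
        Real.log_div (ne_of_gt h2) (ne_of_gt hpj)
      have e2 : z * Real.log z ≥ z - 1 := by
        have := myLog_ge z h2
        have h3 : z * (1 - z⁻¹) = z - 1 := by field_simp
        nlinarith
      have e3 : 0 ≤ Real.log pj := Real.log_nonneg h1.le
      have e4 : z * Real.log pj ≤ Real.log pj := by nlinarith
      have e5 : Real.log pj ≤ pj / 2 := myLog_le_half pj hpj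
      rw [e1] at h; nlinarith

lemma Cclosed {M mm : ℕ} (A : Fin mm → Fin M → ℝ) (b : Fin mm → ℝ) :
    IsClosed {x : Fin M → ℝ |
      (∀ j, 0 ≤ x j) ∧ (∑ j, x j = 1) ∧ ∀ i, ∑ j, A i j * x j = b i} := by
  rw [Set.setOf_and, Set.setOf_and]
  apply IsClosed.inter
  · rw [Set.setOf_forall]
    exact isClosed_iInter fun j => isClosed_le continuous_const (continuous_apply j)
  apply IsClosed.inter
  · exact isClosed_eq (continuous_finset_sum _ fun j _ => continuous_apply j)
      continuous_const
  · rw [Set.setOf_forall]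
    exact isClosed_iInter fun i => isClosed_eq
      (continuous_finset_sum _ fun j _ => (continuous_const.mul (continuous_apply j))) continuous_const

lemma KL_tendsto {M : ℕ} (z x : Fin M → ℝ) (y : ℕ → Fin M → ℝ)
    (hz : ∀ j, 0 ≤ z j) (hsupp : ∀ j, 0 < z j → 0 < x j)
    (hy : ∀ k j, 0 < y k j) (h : Tendsto y atTop (𝓝 x)) :
    Tendsto (fun k => KL z (y k)) atTop (𝓝 (KL z x)) := by
  have hcoord : ∀ j, Tendsto (fun k => y k j) atTop (𝓝 (x j)) :=
    fun j => (tendsto_pi_nhds.1 h) j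
  rw [KL]
  apply tendsto_finset_sum
  intro j _
  rcases eq_or_lt_of_le (hz j) with h0 | h0
  · simp only [← h0, zero_mul, zero_sub, zero_div]
    have : Tendsto (fun k => (0:ℝ) * Real.log (0 / y k j) - 0 + y k j) atTop (𝓝 (x j)) := by
      simpa using hcoord j
    simpa using this
  · have hxj : 0 < x j := hsupp j h0
    have hlog : Tendsto (fun k => Real.log (z j / y k j)) atTop (𝓝 (Real.log (z j / x j))) := by
      apply (Real.continuousAt_log (by positivity)).tendsto.comp
      exact (tendsto_const_nhds.div (hcoord j) (ne_of_gt hxj))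
    exact ((hlog.const_mul (z j)).sub tendsto_const_nhds).add (hcoord j)

lemma KL_self {M : ℕ} (x : Fin M → ℝ) (hx : ∀ j, 0 ≤ x j) : KL x x = 0 := by
  rw [KL]
  apply Finset.sum_eq_zero
  intro j _
  rcases eq_or_lt_of_le (hx j) with h0 | h0
  · rw [← h0]; ring
  · rw [div_self (ne_of_gt h0), Real.log_one]; ring

/-- Mixed cyclic GIS / exact-information-projection iterations converge to the
unique KL-minimizer over the intersection of the affine sets. -/
theorem stmt0 {M n : ℕ} (hn : 0 < n)
    (q : Fin M → ℝ) (hq : ∀ j, 0 < q j)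
    (m : Fin n → ℕ)
    (A : (k : Fin n) → Fin (m k) → Fin M → ℝ) (b : (k : Fin n) → Fin (m k) → ℝ)
    -- GIS conditions for every k:
    (hA0 : ∀ k i j, 0 ≤ A k i j)
    (hArow : ∀ k i, ∃ j, A k i j ≠ 0)
    (hAcol : ∀ k j, ∑ i, A k i j = 1)
    (hb0 : ∀ k i, 0 < b k i)
    (hbsum : ∀ k, ∑ i, b k i = 1)
    -- the affine constraint sets Cᵏ = {x ∈ Δ_M : Aᵏ x = bᵏ}:
    (C : Fin n → Set (Fin M → ℝ))
    (hC : ∀ k, C k = {x : Fin M → ℝ |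
      (∀ j, 0 ≤ x j) ∧ (∑ j, x j = 1) ∧ ∀ i, ∑ j, A k i j * x j = b k i})
    (hCne : (⋂ k, C k).Nonempty)
    -- the subset of indices for which a GIS step is used:
    (I : Set (Fin n))
    -- the sequence of iterates:
    (p : ℕ → Fin M → ℝ)
    (hp0 : p 0 = q)
    (hppos : ∀ k j, 0 < p k j)
    -- GIS update step, for cyclic constraint indices in I:
    (hGIS : ∀ k : ℕ, (⟨k % n, Nat.mod_lt k hn⟩ : Fin n) ∈ I →
      p (k + 1) = fun j => p k j *
        Real.exp (∑ i, A ⟨k % n, Nat.mod_lt k hn⟩ i j *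
          Real.log (b ⟨k % n, Nat.mod_lt k hn⟩ i /
            ∑ j', A ⟨k % n, Nat.mod_lt k hn⟩ i j' * p k j')))
    -- exact KL-projection step, for cyclic constraint indices not in I:
    (hproj : ∀ k : ℕ, (⟨k % n, Nat.mod_lt k hn⟩ : Fin n) ∉ I →
      p (k + 1) ∈ C ⟨k % n, Nat.mod_lt k hn⟩ ∧
        ∀ z ∈ C ⟨k % n, Nat.mod_lt k hn⟩, KL (p (k + 1)) (p k) ≤ KL z (p k)) :
    ∃ pstar ∈ ⋂ k, C k,
      (∀ z ∈ ⋂ k, C k, z ≠ pstar → KL pstar q < KL z q) ∧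
      Tendsto p atTop (𝓝 pstar) := by
  classical
  obtain ⟨z₀, hz₀⟩ := hCne
  -- unpack membership in the intersection
  have hmemC : ∀ (z : Fin M → ℝ), z ∈ (⋂ k, C k) → ∀ r : Fin n,
      (∀ j, 0 ≤ z j) ∧ (∑ j, z j = 1) ∧ ∀ i, ∑ j, A r i j * z j = b r i := by
    intro z hz r
    have := Set.mem_iInter.1 hz r
    rwa [hC r] at this
  have hz00 : ∀ j, 0 ≤ z₀ j := (hmemC z₀ hz₀ ⟨0, hn⟩).1
  have hz0sum : ∑ j, z₀ j = 1 := (hmemC z₀ hz₀ ⟨0, hn⟩).2.1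
  -- the z-independent decrement
  set d : ℕ → ℝ := fun k => KL z₀ (p k) - KL z₀ (p (k + 1)) with hd
  -- value of d for GIS steps
  have hgis_d : ∀ k, (⟨k % n, Nat.mod_lt k hn⟩ : Fin n) ∈ I →
      d k = (∑ i, b ⟨k % n, Nat.mod_lt k hn⟩ i * Real.log (b ⟨k % n, Nat.mod_lt k hn⟩ i /
        ∑ j', A ⟨k % n, Nat.mod_lt k hn⟩ i j' * p k j')) - ((∑ j, p (k+1) j) - ∑ j, p k j) := by
    intro k hI
    have h1 := gis_identity (A _) (b _) (p k) (p (k+1)) z₀ (hppos k) (hGIS k hI)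
      ((hmemC z₀ hz₀ _).2.2) hz00
    simp only [hd]
    linarith
  -- value of d for projection steps
  have hproj_d : ∀ k, (⟨k % n, Nat.mod_lt k hn⟩ : Fin n) ∉ I →
      d k = KL (p (k+1)) (p k) := by
    intro k hI
    have hE := Ezero (A _) (b _) (p k) (p (k+1)) z₀ (hppos k) (hppos (k+1)) (C _)
      (hC _) (hproj k hI).1 (fun w hw => (hproj k hI).2 w hw) (Set.mem_iInter.1 hz₀ _)
    have h1 := proj_identity (p k) (p (k+1)) z₀ (hppos k) (hppos (k+1)) hz00 hE
    simp only [hd]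
    linarith
  -- z-independence of the decrement
  have hstep : ∀ (k : ℕ) (z : Fin M → ℝ), z ∈ (⋂ k, C k) →
      KL z (p (k+1)) = KL z (p k) - d k := by
    intro k z hz
    by_cases hI : (⟨k % n, Nat.mod_lt k hn⟩ : Fin n) ∈ I
    · rw [gis_identity (A _) (b _) (p k) (p (k+1)) z (hppos k) (hGIS k hI)
        ((hmemC z hz _).2.2) ((hmemC z hz ⟨k % n, Nat.mod_lt k hn⟩).1), hgis_d k hI]
    · have hE := Ezero (A _) (b _) (p k) (p (k+1)) z (hppos k) (hppos (k+1)) (C _)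
        (hC _) (hproj k hI).1 (fun w hw => (hproj k hI).2 w hw) (Set.mem_iInter.1 hz _)
      rw [proj_identity (p k) (p (k+1)) z (hppos k) (hppos (k+1))
        ((hmemC z hz ⟨k % n, Nat.mod_lt k hn⟩).1) hE, hproj_d k hI]
  -- nonnegativity of the decrement, and the GIS lower bound
  have hd0 : ∀ k, 0 ≤ d k := by
    intro k
    by_cases hI : (⟨k % n, Nat.mod_lt k hn⟩ : Fin n) ∈ I
    · rw [hgis_d k hI]
      exact (gis_decr (A _) (b _) (p k) (p (k+1)) (hppos k) (hA0 _) (hArow _)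
        (hAcol _) (hb0 _) (hbsum _) (hGIS k hI)).1
    · rw [hproj_d k hI]
      exact KL_nonneg (fun j => (hppos (k+1) j).le) (hppos k)
  have hgis_bound : ∀ k, (hI : (⟨k % n, Nat.mod_lt k hn⟩ : Fin n) ∈ I) → ∀ i₀,
      b ⟨k % n, Nat.mod_lt k hn⟩ i₀ * Real.log (b ⟨k % n, Nat.mod_lt k hn⟩ i₀ /
        ∑ j', A ⟨k % n, Nat.mod_lt k hn⟩ i₀ j' * p k j') - b ⟨k % n, Nat.mod_lt k hn⟩ i₀
        + (∑ j', A ⟨k % n, Nat.mod_lt k hn⟩ i₀ j' * p k j') ≤ d k := by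
    intro k hI i₀
    rw [hgis_d k hI]
    exact (gis_decr (A _) (b _) (p k) (p (k+1)) (hppos k) (hA0 _) (hArow _)
      (hAcol _) (hb0 _) (hbsum _) (hGIS k hI)).2 i₀
  -- monotonicity and convergence of KL z (p k)
  have hantiK : ∀ z, z ∈ (⋂ k, C k) → Antitone (fun k => KL z (p k)) := by
    intro z hz
    apply antitone_nat_of_succ_le
    intro k
    rw [hstep k z hz]
    linarith [hd0 k]
  have hKLpos : ∀ z, z ∈ (⋂ k, C k) → ∀ k, 0 ≤ KL z (p k) :=
    fun z hz k => KL_nonneg (hmemC z hz ⟨0, hn⟩).1 (hppos k)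
  have hbdd : ∀ z, z ∈ (⋂ k, C k) → BddBelow (Set.range (fun k => KL z (p k))) := by
    intro z hz
    refine ⟨0, ?_⟩
    rintro x ⟨k, rfl⟩
    exact hKLpos z hz k
  have hz₀tend : Tendsto (fun k => KL z₀ (p k)) atTop (𝓝 (⨅ k, KL z₀ (p k))) :=
    tendsto_atTop_ciInf (hantiK z₀ hz₀) (hbdd z₀ hz₀)
  have hdtend : Tendsto d atTop (𝓝 0) := by
    have h2 := hz₀tend.comp (tendsto_add_atTop_nat 1)
    have h3 := hz₀tend.sub h2
    simpa using h3
  -- telescoping identity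
  have htele : ∀ (z : Fin M → ℝ), z ∈ (⋂ k, C k) → ∀ k : ℕ,
      KL z (p k) - KL z q = KL z₀ (p k) - KL z₀ q := by
    intro z hz k
    induction k with
    | zero => rw [hp0]; ring
    | succ t ih =>
      rw [hstep t z hz, hstep t z₀ hz₀]
      linarith
  -- uniform bound on the iterates
  have hKLq0 : 0 ≤ KL z₀ q := KL_nonneg hz00 hq
  set R : ℝ := 2 * KL z₀ q + 4 with hR
  have hR1 : (1:ℝ) ≤ R := by rw [hR]; linarith
  have hR0 : (0:ℝ) < R := by linarith
  have hz0le1 : ∀ j, z₀ j ≤ 1 := by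
    intro j
    rw [← hz0sum]
    exact Finset.single_le_sum (fun i _ => hz00 i) (Finset.mem_univ j)
  have hpR : ∀ k j, p k j ≤ R := by
    intro k j
    have h1 : KL z₀ (p k) ≤ KL z₀ q := by
      have := hantiK z₀ hz₀ (Nat.zero_le k)
      simp only [hp0] at this
      exact this
    have h2 := KL_term_le hz00 (hppos k) j
    exact pj_bound (hz00 j) (hz0le1 j) (hppos k j) (le_trans h2 h1)
  -- bound for Pinsker arguments
  set B : ℝ := (M:ℝ) * R + R + 1 with hB
  have hB0 : (0:ℝ) < B := by positivity
  have hRB : R ≤ B := by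
    rw [hB]; nlinarith [Nat.cast_nonneg (α := ℝ) M]
  have h1B : (1:ℝ) ≤ B := le_trans hR1 hRB
  have hAle1 : ∀ (r : Fin n) i j, A r i j ≤ 1 := by
    intro r i j
    calc A r i j ≤ ∑ i', A r i' j :=
          Finset.single_le_sum (fun i' _ => hA0 r i' j) (Finset.mem_univ i)
      _ = 1 := hAcol r j
  have hble1 : ∀ (r : Fin n) i, b r i ≤ 1 := by
    intro r i
    calc b r i ≤ ∑ i', b r i' :=
          Finset.single_le_sum (fun i' _ => (hb0 r i').le) (Finset.mem_univ i)
      _ = 1 := hbsum r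
  have hcB : ∀ (r : Fin n) (i : Fin (m r)) (k : ℕ), (∑ j', A r i j' * p k j') ≤ B := by
    intro r i k
    have h1 : (∑ j', A r i j' * p k j') ≤ ∑ _j' : Fin M, R := by
      apply Finset.sum_le_sum
      intro j' _
      calc A r i j' * p k j' ≤ 1 * R :=
            mul_le_mul (hAle1 r i j') (hpR k j') (hppos k j').le zero_le_one
        _ = R := one_mul R
    rw [Finset.sum_const, Finset.card_univ, Fintype.card_fin, nsmul_eq_mul] at h1
    rw [hB]; linarith
  have hcpos : ∀ (r : Fin n) (i : Fin (m r)) (k : ℕ), 0 < ∑ j', A r i j' * p k j' := by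
    intro r i k
    obtain ⟨j₀, hj₀⟩ := hArow r i
    exact Finset.sum_pos' (fun j _ => mul_nonneg (hA0 r i j) (hppos k j).le)
      ⟨j₀, Finset.mem_univ j₀, mul_pos (lt_of_le_of_ne (hA0 r i j₀) (Ne.symm hj₀)) (hppos k j₀)⟩
  -- subsequence extraction in the compact box
  have hcompact : IsCompact (Set.Icc (0 : Fin (n+1) → Fin M → ℝ) (fun _ _ => R)) :=
    isCompact_Icc
  have hΦmem : ∀ j : ℕ, (fun s : Fin (n+1) => p (j * n + (s:ℕ)))
      ∈ Set.Icc (0 : Fin (n+1) → Fin M → ℝ) (fun _ _ => R) := by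
    intro j
    constructor
    · exact Pi.le_def.2 fun s => Pi.le_def.2 fun jj => (hppos _ jj).le
    · exact Pi.le_def.2 fun s => Pi.le_def.2 fun jj => hpR _ jj
  obtain ⟨xh, hxhK, φ, hφmono, hφtend⟩ := hcompact.tendsto_subseq hΦmem
  have hconv : ∀ s : Fin (n+1), Tendsto (fun j => p (φ j * n + (s:ℕ))) atTop (𝓝 (xh s)) := by
    intro s
    exact tendsto_pi_nhds.1 hφtend s
  have hxh0 : ∀ s jj, 0 ≤ xh s jj := fun s jj => hxhK.1 s jj
  have hxhR : ∀ s jj, xh s jj ≤ R := fun s jj => hxhK.2 s jj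
  have hidx : ∀ s : ℕ, Tendsto (fun j : ℕ => φ j * n + s) atTop atTop := by
    intro s
    apply tendsto_atTop_mono (f := fun j : ℕ => j) (fun j => ?_) tendsto_id
    calc j ≤ φ j := hφmono.le_apply
      _ ≤ φ j * n := Nat.le_mul_of_pos_right _ hn
      _ ≤ φ j * n + s := Nat.le_add_right _ _
  -- consecutive within-cycle limits agree and satisfy the constraints
  have hss : ∀ (s : ℕ) (hs : s < n),
      xh ⟨s+1, by omega⟩ = xh ⟨s, by omega⟩ ∧ xh ⟨s, by omega⟩ ∈ C ⟨s, hs⟩ := by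
    intro s hs
    have hsn1 : s < n + 1 := by omega
    have hs1n1 : s + 1 < n + 1 := by omega
    have hfin : ∀ j : ℕ, (⟨(φ j * n + s) % n, Nat.mod_lt _ hn⟩ : Fin n) = ⟨s, hs⟩ := by
      intro j
      apply Fin.ext
      show (φ j * n + s) % n = s
      rw [Nat.mul_add_mod', Nat.mod_eq_of_lt hs]
    have hcs : Tendsto (fun j => p (φ j * n + s)) atTop (𝓝 (xh ⟨s, hsn1⟩)) := by
      simpa using hconv ⟨s, hsn1⟩
    have hcs1 : Tendsto (fun j => p (φ j * n + s + 1)) atTop (𝓝 (xh ⟨s+1, hs1n1⟩)) := by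
      simpa [add_assoc] using hconv ⟨s+1, hs1n1⟩
    have hdk : Tendsto (fun j => d (φ j * n + s)) atTop (𝓝 0) := hdtend.comp (hidx s)
    by_cases hI : (⟨s, hs⟩ : Fin n) ∈ I
    · -- GIS case
      have hIk : ∀ j : ℕ, (⟨(φ j * n + s) % n, Nat.mod_lt _ hn⟩ : Fin n) ∈ I := by
        intro j; rw [hfin j]; exact hI
      have hbAx : ∀ i : Fin (m ⟨s, hs⟩),
          (∑ j', A ⟨s, hs⟩ i j' * xh ⟨s, hsn1⟩ j') = b ⟨s, hs⟩ i := by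
        intro i
        set cst : ℝ := ∑ j', A ⟨s, hs⟩ i j' * xh ⟨s, hsn1⟩ j' with hcst
        set cf : ℕ → ℝ := fun j => ∑ j', A ⟨s, hs⟩ i j' * p (φ j * n + s) j' with hcf
        have hcfpos : ∀ j, 0 < cf j := fun j => hcpos ⟨s, hs⟩ i _
        have hctend : Tendsto cf atTop (𝓝 cst) := by
          apply tendsto_finset_sum
          intro j' _
          exact tendsto_const_nhds.mul ((tendsto_pi_nhds.1 hcs) j')
        set tf : ℕ → ℝ := fun j =>
          b ⟨s, hs⟩ i * Real.log (b ⟨s, hs⟩ i / cf j) - b ⟨s, hs⟩ i + cf j with htf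
        have htfle : ∀ j, tf j ≤ d (φ j * n + s) := by
          intro j
          have h' := hgis_bound (φ j * n + s) (hIk j)
          rw [hfin j] at h'
          exact h' i
        have htfge : ∀ j, 0 ≤ tf j := fun j => klterm_nonneg (hb0 _ i).le (hcfpos j)
        have htf0 : Tendsto tf atTop (𝓝 0) := squeeze_zero htfge htfle hdk
        have hcst0 : (0:ℝ) ≤ cst := ge_of_tendsto' hctend (fun j => (hcfpos j).le)
        rcases eq_or_lt_of_le hcst0 with h0 | h0
        · exfalso
          have hc0 : Tendsto cf atTop (𝓝[>] (0:ℝ)) := by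
            apply tendsto_nhdsWithin_of_tendsto_nhds_of_eventually_within
            · rwa [← h0] at hctend
            · exact Filter.Eventually.of_forall (fun j => hcfpos j)
          have hlogc : Tendsto (fun j => Real.log (cf j)) atTop atBot :=
            Real.tendsto_log_nhdsGT_zero.comp hc0
          have htop : Tendsto tf atTop atTop := by
            have h1 : Tendsto (fun j => (- b ⟨s,hs⟩ i) * Real.log (cf j)) atTop atTop :=
              (tendsto_const_mul_atTop_of_neg (by linarith [hb0 ⟨s,hs⟩ i])).2 hlogc
            have h2 : Tendsto (fun j => (- b ⟨s,hs⟩ i) * Real.log (cf j)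
                + (b ⟨s,hs⟩ i * Real.log (b ⟨s,hs⟩ i) - b ⟨s,hs⟩ i + cf j)) atTop atTop :=
              tendsto_atTop_add_right_of_le _
                (b ⟨s,hs⟩ i * Real.log (b ⟨s,hs⟩ i) - b ⟨s,hs⟩ i) h1
                (fun j => by linarith [hcfpos j])
            apply Filter.Tendsto.congr _ h2
            intro j
            rw [htf]
            simp only
            rw [Real.log_div (ne_of_gt (hb0 _ i)) (ne_of_gt (hcfpos j))]
            ring
          exact not_tendsto_atTop_of_tendsto_nhds htf0 htop
        · have hlog : Tendsto (fun j => Real.log (b ⟨s,hs⟩ i / cf j)) atTop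
              (𝓝 (Real.log (b ⟨s,hs⟩ i / cst))) := by
            have hb := hb0 ⟨s,hs⟩ i
            exact (Real.continuousAt_log (by positivity)).tendsto.comp
              (tendsto_const_nhds.div hctend (ne_of_gt h0))
          have hlim : Tendsto tf atTop (𝓝 (b ⟨s,hs⟩ i * Real.log (b ⟨s,hs⟩ i / cst)
              - b ⟨s,hs⟩ i + cst)) :=
            ((hlog.const_mul _).sub tendsto_const_nhds).add hctend
          have hval := tendsto_nhds_unique hlim htf0
          by_contra hne
          exact absurd hval (ne_of_gt (klterm_pos (hb0 _ i) h0 (fun h => hne h.symm)))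
      have hsum1 : (∑ j', xh ⟨s, hsn1⟩ j') = 1 := by
        have h1 : ∀ j', xh ⟨s, hsn1⟩ j' = ∑ i, A ⟨s,hs⟩ i j' * xh ⟨s,hsn1⟩ j' := by
          intro j'
          rw [← Finset.sum_mul, hAcol ⟨s,hs⟩ j', one_mul]
        calc (∑ j', xh ⟨s, hsn1⟩ j') = ∑ j', ∑ i, A ⟨s,hs⟩ i j' * xh ⟨s,hsn1⟩ j' :=
              Finset.sum_congr rfl (fun j' _ => h1 j')
          _ = ∑ i, ∑ j', A ⟨s,hs⟩ i j' * xh ⟨s,hsn1⟩ j' := Finset.sum_comm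
          _ = ∑ i, b ⟨s,hs⟩ i := Finset.sum_congr rfl (fun i _ => hbAx i)
          _ = 1 := hbsum _
      have hmemxs : xh ⟨s, hsn1⟩ ∈ C ⟨s, hs⟩ := by
        rw [hC]
        exact ⟨fun jj => hxh0 _ jj, hsum1, hbAx⟩
      have hgislim : Tendsto (fun j => p (φ j * n + s + 1)) atTop (𝓝 (xh ⟨s, hsn1⟩)) := by
        rw [tendsto_pi_nhds]
        intro jj
        have hupd : ∀ j : ℕ, p (φ j * n + s + 1) jj = p (φ j * n + s) jj *
            Real.exp (∑ i, A ⟨s,hs⟩ i jj * Real.log (b ⟨s,hs⟩ i /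
              ∑ j', A ⟨s,hs⟩ i j' * p (φ j * n + s) j')) := by
          intro j
          have h' := hGIS (φ j * n + s) (hIk j)
          rw [hfin j] at h'
          exact congrFun h' jj
        have hinner : Tendsto (fun j => ∑ i, A ⟨s,hs⟩ i jj * Real.log (b ⟨s,hs⟩ i /
            ∑ j', A ⟨s,hs⟩ i j' * p (φ j * n + s) j')) atTop (𝓝 0) := by
          have hz : (0:ℝ) = ∑ i : Fin (m ⟨s,hs⟩), A ⟨s,hs⟩ i jj *
              Real.log (b ⟨s,hs⟩ i / b ⟨s,hs⟩ i) := by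
            rw [Finset.sum_eq_zero]
            intro i _
            rw [div_self (ne_of_gt (hb0 _ i)), Real.log_one, mul_zero]
          rw [hz]
          apply tendsto_finset_sum
          intro i _
          apply Filter.Tendsto.const_mul
          have hctend : Tendsto (fun j => ∑ j', A ⟨s,hs⟩ i j' * p (φ j * n + s) j')
              atTop (𝓝 (b ⟨s,hs⟩ i)) := by
            have h1 : Tendsto (fun j => ∑ j', A ⟨s,hs⟩ i j' * p (φ j * n + s) j')
                atTop (𝓝 (∑ j', A ⟨s,hs⟩ i j' * xh ⟨s,hsn1⟩ j')) := by
              apply tendsto_finset_sum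
              intro j' _
              exact tendsto_const_nhds.mul ((tendsto_pi_nhds.1 hcs) j')
            rwa [hbAx i] at h1
          have hb := hb0 ⟨s,hs⟩ i
          exact (Real.continuousAt_log (by positivity)).tendsto.comp
            (tendsto_const_nhds.div hctend (ne_of_gt hb))
        have h2 := ((tendsto_pi_nhds.1 hcs) jj).mul
          ((Real.continuous_exp.tendsto 0).comp hinner)
        rw [Real.exp_zero, mul_one] at h2
        exact Filter.Tendsto.congr (fun j => (hupd j).symm) h2
      have heqc := tendsto_nhds_unique hcs1 hgislim
      exact ⟨heqc, hmemxs⟩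
    · -- projection case
      have hIk : ∀ j : ℕ, (⟨(φ j * n + s) % n, Nat.mod_lt _ hn⟩ : Fin n) ∉ I := by
        intro j; rw [hfin j]; exact hI
      have hdval : ∀ j, d (φ j * n + s) = KL (p (φ j * n + s + 1)) (p (φ j * n + s)) :=
        fun j => hproj_d _ (hIk j)
      have heqc : xh ⟨s+1, hs1n1⟩ = xh ⟨s, hsn1⟩ := by
        funext jj
        have hsq : Tendsto (fun j => (p (φ j * n + s + 1) jj - p (φ j * n + s) jj)^2)
            atTop (𝓝 0) := by
          apply squeeze_zero (fun j => sq_nonneg _) (g := fun j => 4 * B * d (φ j * n + s))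
          · intro j
            calc (p (φ j * n + s + 1) jj - p (φ j * n + s) jj)^2
                ≤ 4 * B * (p (φ j * n + s + 1) jj *
                    Real.log (p (φ j * n + s + 1) jj / p (φ j * n + s) jj)
                    - p (φ j * n + s + 1) jj + p (φ j * n + s) jj) :=
                  klterm_pinsker (hppos _ jj).le (hppos _ jj)
                    (le_trans (hpR _ jj) hRB) (le_trans (hpR _ jj) hRB)
              _ ≤ 4 * B * KL (p (φ j * n + s + 1)) (p (φ j * n + s)) := by
                  apply mul_le_mul_of_nonneg_left
                    (KL_term_le (fun j2 => (hppos _ j2).le) (hppos _) jj) (by positivity)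
              _ = 4 * B * d (φ j * n + s) := by rw [hdval j]
          · have := hdk.const_mul (4 * B)
            simpa using this
        have hlim2 : Tendsto (fun j => (p (φ j * n + s + 1) jj - p (φ j * n + s) jj)^2) atTop
            (𝓝 ((xh ⟨s+1, hs1n1⟩ jj - xh ⟨s, hsn1⟩ jj)^2)) :=
          (((tendsto_pi_nhds.1 hcs1) jj).sub ((tendsto_pi_nhds.1 hcs) jj)).pow 2
        have h3 := sq_eq_zero_iff.1 (tendsto_nhds_unique hlim2 hsq)
        linarith
      have hmem1 : xh ⟨s+1, hs1n1⟩ ∈ C ⟨s, hs⟩ := by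
        have hclosed : IsClosed (C ⟨s, hs⟩) := by rw [hC]; exact Cclosed _ _
        apply hclosed.mem_of_tendsto hcs1
        apply Filter.Eventually.of_forall
        intro j
        have h' := (hproj _ (hIk j)).1
        rwa [hfin j] at h'
      exact ⟨heqc, heqc ▸ hmem1⟩
  -- all within-cycle limits coincide
  have heq0 : ∀ (s : ℕ) (hs : s ≤ n), xh ⟨s, by omega⟩ = xh ⟨0, by omega⟩ := by
    intro s
    induction s with
    | zero => intro _; rfl
    | succ t ih =>
      intro hs
      have h1 := (hss t (by omega)).1
      rw [h1]
      exact ih (by omega)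
  set pstar : Fin M → ℝ := xh ⟨0, by omega⟩ with hpstar
  have hpstarC : pstar ∈ ⋂ k, C k := by
    rw [Set.mem_iInter]
    intro r
    have h1 := (hss r.1 r.2).2
    rw [heq0 r.1 (le_of_lt r.2)] at h1
    exact h1
  have hpstar0 : ∀ jj, 0 ≤ pstar jj := fun jj => hxh0 _ jj
  have hpstarR : ∀ jj, pstar jj ≤ R := fun jj => hxhR _ jj
  -- KL pstar (p k) → 0
  have hx0conv : Tendsto (fun j => p (φ j * n + 0)) atTop (𝓝 pstar) := by
    simpa [hpstar] using hconv ⟨0, by omega⟩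
  have hKxk : Tendsto (fun j => KL pstar (p (φ j * n + 0))) atTop (𝓝 0) := by
    have h1 := KL_tendsto pstar pstar (fun j => p (φ j * n + 0)) hpstar0
      (fun _ h => h) (fun k jj => hppos _ jj) hx0conv
    rwa [KL_self pstar hpstar0] at h1
  have hFtend : Tendsto (fun k => KL pstar (p k)) atTop (𝓝 (⨅ k, KL pstar (p k))) :=
    tendsto_atTop_ciInf (hantiK pstar hpstarC) (hbdd pstar hpstarC)
  have hinf0 : (⨅ k, KL pstar (p k)) = 0 :=
    tendsto_nhds_unique (hFtend.comp (hidx 0)) hKxk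
  have hF0 : Tendsto (fun k => KL pstar (p k)) atTop (𝓝 0) := hinf0 ▸ hFtend
  -- p → pstar
  have hptend : Tendsto p atTop (𝓝 pstar) := by
    rw [tendsto_pi_nhds]
    intro jj
    have hsq : Tendsto (fun k => (pstar jj - p k jj)^2) atTop (𝓝 0) := by
      apply squeeze_zero (fun k => sq_nonneg _) (g := fun k => 4 * B * KL pstar (p k))
      · intro k
        calc (pstar jj - p k jj)^2
            ≤ 4 * B * (pstar jj * Real.log (pstar jj / p k jj) - pstar jj + p k jj) :=
              klterm_pinsker (hpstar0 jj) (hppos k jj)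
                (le_trans (hpstarR jj) hRB) (le_trans (hpR k jj) hRB)
          _ ≤ 4 * B * KL pstar (p k) :=
              mul_le_mul_of_nonneg_left (KL_term_le hpstar0 (hppos k) jj) (by positivity)
      · have := hF0.const_mul (4 * B)
        simpa using this
    have habs : Tendsto (fun k => |pstar jj - p k jj|) atTop (𝓝 0) := by
      have h1 := (Real.continuous_sqrt.tendsto 0).comp hsq
      rw [Real.sqrt_zero] at h1
      apply h1.congr
      intro k
      exact Real.sqrt_sq_eq_abs _
    rw [tendsto_iff_dist_tendsto_zero]
    apply habs.congr
    intro k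
    rw [Real.dist_eq, abs_sub_comm]
  refine ⟨pstar, hpstarC, ?_, hptend⟩
  -- strict minimality
  intro z hz hne
  have hz0' : ∀ j, 0 ≤ z j := (hmemC z hz ⟨0, hn⟩).1
  have hKLzlim : Tendsto (fun k => KL z (p k)) atTop (𝓝 (KL z q - KL pstar q)) := by
    have he : (fun k => KL z (p k)) = fun k => KL pstar (p k) + (KL z q - KL pstar q) := by
      funext k
      have h1 := htele z hz k
      have h2 := htele pstar hpstarC k
      linarith
    rw [he]
    have := hF0.add_const (KL z q - KL pstar q)
    simpa using this
  have hsupp : ∀ jj, 0 < z jj → 0 < pstar jj := by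
    intro jj hzjj
    rcases eq_or_lt_of_le (hpstar0 jj) with h0 | h0
    · exfalso
      have hpc : Tendsto (fun k => p k jj) atTop (𝓝[>] (0:ℝ)) := by
        apply tendsto_nhdsWithin_of_tendsto_nhds_of_eventually_within
        · have := tendsto_pi_nhds.1 hptend jj
          rwa [← h0] at this
        · exact Filter.Eventually.of_forall (fun k => hppos k jj)
      have hlogb : Tendsto (fun k => Real.log (p k jj)) atTop atBot :=
        Real.tendsto_log_nhdsGT_zero.comp hpc
      have hterm : Tendsto (fun k => z jj * Real.log (z jj / p k jj) - z jj + p k jj)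
          atTop atTop := by
        have h1 : Tendsto (fun k => (- z jj) * Real.log (p k jj)) atTop atTop :=
          (tendsto_const_mul_atTop_of_neg (by linarith)).2 hlogb
        have h2 : Tendsto (fun k => (- z jj) * Real.log (p k jj)
            + (z jj * Real.log (z jj) - z jj + p k jj)) atTop atTop :=
          tendsto_atTop_add_right_of_le _ (z jj * Real.log (z jj) - z jj) h1
            (fun k => by linarith [hppos k jj])
        apply Filter.Tendsto.congr _ h2
        intro k
        rw [Real.log_div (ne_of_gt hzjj) (ne_of_gt (hppos k jj))]
        ring
      obtain ⟨k, hk⟩ := (hterm.eventually_gt_atTop (KL z q)).exists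
      have h2 : z jj * Real.log (z jj / p k jj) - z jj + p k jj ≤ KL z (p k) :=
        KL_term_le hz0' (hppos k) jj
      have h3 : KL z (p k) ≤ KL z q := by
        have := hantiK z hz (Nat.zero_le k)
        simp only [hp0] at this
        exact this
      linarith
    · exact h0
  have hlim2 : Tendsto (fun k => KL z (p k)) atTop (𝓝 (KL z pstar)) :=
    KL_tendsto z pstar p hz0' hsupp hppos hptend
  have heq2 : KL z pstar = KL z q - KL pstar q := tendsto_nhds_unique hlim2 hKLzlim
  have hpos : 0 < KL z pstar := by
    obtain ⟨jj, hjj⟩ : ∃ jj, z jj ≠ pstar jj := Function.ne_iff.1 hne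
    have hterms : ∀ j', 0 ≤ z j' * Real.log (z j' / pstar j') - z j' + pstar j' := by
      intro j'
      rcases eq_or_lt_of_le (hz0' j') with h0 | h0
      · rw [← h0]
        simpa using hpstar0 j'
      · exact klterm_nonneg (hz0' j') (hsupp j' h0)
    have hj : 0 < z jj * Real.log (z jj / pstar jj) - z jj + pstar jj := by
      rcases eq_or_lt_of_le (hz0' jj) with h0 | h0
      · rw [← h0]
        have h1 : pstar jj ≠ 0 := fun h => hjj (by rw [← h0, h])
        have h2 : 0 < pstar jj := lt_of_le_of_ne (hpstar0 jj) (Ne.symm h1)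
        simp only [zero_mul, zero_sub]
        linarith
      · exact klterm_pos h0 (hsupp jj h0) hjj
    calc (0:ℝ) < z jj * Real.log (z jj / pstar jj) - z jj + pstar jj := hj
      _ ≤ KL z pstar := Finset.single_le_sum (fun j' _ => hterms j') (Finset.mem_univ jj)
  linarith
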